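/- Let I ⊆ ℝ be an open interval, f : I → ℝ differentiable, and define U(ξ) = 4 arctan(e^{f(ξ)}). Then U satisfies U'(ξ) = sin U(ξ) − γ on I if and only if f satisfies f'(ξ) = −(tanh f(ξ) + (γ/2) cosh f(ξ)) on I. -/

import Mathlib

open Real

lemma sin_four_arctan (t : ℝ) :
    Real.sin (4 * Real.arctan t) = 4 * t * (1 - t^2) / (1 + t^2)^2 := by
  have h4 : (4:ℝ) * arctan t = 2 * (2 * arctan t) := by ring
  have hsq : Real.sqrt (1 + t^2) ^ 2 = 1 + t^2 := Real.sq_sqrt (by positivity)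
  rw [h4, Real.sin_two_mul, Real.cos_two_mul, Real.sin_two_mul,
    Real.sin_arctan, Real.cos_arctan]
  field_simp
  ring_nf
  rw [show Real.sqrt (1 + t ^ 2) ^ 4 = (Real.sqrt (1 + t ^ 2) ^ 2) ^ 2 by ring, hsq]
  ring

/-- Let I = (a,b) be an open interval, f : I → ℝ differentiable and
U(ξ) = 4 arctan(e^{f(ξ)}). Then U' = sin U − γ on I iff
f' = −(tanh f + (γ/2) cosh f) on I. -/
theorem stmt10 (γ a b : ℝ) (f : ℝ → ℝ)
    (hf : ∀ ξ ∈ Set.Ioo a b, DifferentiableAt ℝ f ξ)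
    (U : ℝ → ℝ) (hU : ∀ ξ : ℝ, U ξ = 4 * Real.arctan (Real.exp (f ξ))) :
    (∀ ξ ∈ Set.Ioo a b, deriv U ξ = Real.sin (U ξ) - γ) ↔
    (∀ ξ ∈ Set.Ioo a b, deriv f ξ = -(Real.tanh (f ξ) + γ / 2 * Real.cosh (f ξ))) := by
  have hUfun : U = fun ξ => 4 * Real.arctan (Real.exp (f ξ)) := funext hU
  subst hUfun
  apply forall₂_congr
  intro ξ hξ
  have hd := hf ξ hξ
  set y := f ξ with hy
  set t := Real.exp y with htdef
  have ht : 0 < t := Real.exp_pos y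
  have hD : HasDerivAt (fun ξ => 4 * Real.arctan (Real.exp (f ξ)))
      (4 * ((1 / (1 + t ^ 2)) * (t * deriv f ξ))) ξ := by
    have h1 : HasDerivAt (fun ξ => Real.exp (f ξ)) (t * deriv f ξ) ξ :=
      (Real.hasDerivAt_exp y).comp ξ hd.hasDerivAt
    have h2 := (Real.hasDerivAt_arctan t).comp ξ h1
    simpa [mul_comm, mul_assoc, mul_left_comm] using h2.const_mul 4
  rw [hD.deriv]
  simp only [sin_four_arctan]
  have htanh : Real.tanh y = (t^2 - 1) / (t^2 + 1) := by
    rw [Real.tanh_eq_sinh_div_cosh, Real.sinh_eq, Real.cosh_eq, Real.exp_neg]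
    field_simp
    ring
  have hcosh : Real.cosh y = (t^2 + 1) / (2 * t) := by
    rw [Real.cosh_eq, Real.exp_neg]
    field_simp
    ring
  rw [htanh, hcosh]
  have hc : (4 * (1 / (1 + t ^ 2)) * t) ≠ 0 := by positivity
  have hrw : 4 * (1 / (1 + t ^ 2) * (t * deriv f ξ))
      = deriv f ξ * (4 * (1 / (1 + t ^ 2)) * t) := by ring
  rw [hrw, ← eq_div_iff hc]
  have hval : (4 * t * (1 - t ^ 2) / (1 + t ^ 2) ^ 2 - γ) / (4 * (1 / (1 + t ^ 2)) * t)
      = -((t ^ 2 - 1) / (t ^ 2 + 1) + γ / 2 * ((t ^ 2 + 1) / (2 * t))) := by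
    field_simp
    ring
  rw [hval]
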